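/- Suppose every element occurring in the sequence x_1, …, x_T belongs to a subset Y ⊆ X with |Y| = m̄ (so m̄ ≤ n). Then the number of time steps at which the current element has been visited few times relative to the current time, namely Z_T := #{1 ≤ t ≤ T : max(1, N_{k_t}(x_t) − 1) ≤ √(t/n)}, satisfies Z_T ≤ 2·√(m̄·T) + 2·m̄. -/

import Mathlib

/-- If every element occurring in the sequence `x 1, …, x T` belongs to
a subset `Y ⊆ X` with `|Y| = mbar`, then the number of time steps at which the current
element has been visited few times relative to the current time, namely
`Z_T := #{1 ≤ t ≤ T : max 1 (N_{k_t}(x_t) − 1) ≤ √(t/n)}`, satisfies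
`Z_T ≤ 2·√(mbar·T) + 2·mbar`. -/
theorem poorly_visited_bound
    {X : Type*} [Fintype X] [DecidableEq X]
    (n : ℕ) (hn : n = Fintype.card X) (hn1 : 1 ≤ n)
    (T m : ℕ) (hT : 1 ≤ T) (hm : 1 ≤ m)
    (x : ℕ → X) (t : ℕ → ℕ)
    (ht1 : t 1 = 1)
    (htmono : ∀ k, 1 ≤ k → k < m → t k < t (k + 1))
    (htm : t m ≤ T) (htm1 : t (m + 1) = T + 1)
    (N ν : ℕ → X → ℕ)
    (hN : ∀ k y, N k y = ((Finset.Ico 1 (t k)).filter (fun s => x s = y)).card)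
    (hν : ∀ k y, ν k y = ((Finset.Ico (t k) (t (k + 1))).filter (fun s => x s = y)).card)
    (hstop : ∀ k y, 1 ≤ k → k ≤ m → ν k y ≤ max 1 (N k y))
    (kt : ℕ → ℕ)
    (hkt : ∀ s, 1 ≤ s → s ≤ T →
      1 ≤ kt s ∧ kt s ≤ m ∧ t (kt s) ≤ s ∧
        ∀ k, 1 ≤ k → k ≤ m → t k ≤ s → k ≤ kt s)
    (Y : Finset X) (mbar : ℕ) (hY : Y.card = mbar)
    (hxY : ∀ s, 1 ≤ s → s ≤ T → x s ∈ Y) :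
    (((Finset.Icc 1 T).filter (fun s =>
        (max 1 (N (kt s) (x s) - 1) : ℝ) ≤ Real.sqrt ((s : ℝ) / n))).card : ℝ)
      ≤ 2 * Real.sqrt ((mbar : ℝ) * T) + 2 * mbar := by
  classical
  have hn0 : (0:ℝ) < n := by exact_mod_cast hn1
  set A : Finset ℕ := (Finset.Icc 1 T).filter (fun s =>
      (max 1 (N (kt s) (x s) - 1) : ℝ) ≤ Real.sqrt ((s : ℝ) / n)) with hA
  set c : ℝ := Real.sqrt ((T:ℝ)/n) with hc
  have hc0 : 0 ≤ c := Real.sqrt_nonneg _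
  -- step monotonicity of t
  have hstep : ∀ k, 1 ≤ k → k ≤ m → t k ≤ t (k+1) := by
    intro k hk1 hkm
    rcases lt_or_eq_of_le hkm with h | h
    · exact (htmono k hk1 h).le
    · subst h; omega
  have htle : ∀ j k, 1 ≤ j → j ≤ k → k ≤ m + 1 → t j ≤ t k := by
    intro j k hj hjk hkm
    induction k with
    | zero => omega
    | succ k ih =>
      rcases Nat.lt_or_ge k j with h | h
      · have : j = k + 1 := by omega
        subst this; exact le_rfl
      · exact le_trans (ih (by omega) (by omega)) (hstep k (by omega) (by omega))
  -- facts at each counted time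
  have hAfact : ∀ s ∈ A, 1 ≤ s ∧ s ≤ T ∧ 1 ≤ kt s ∧ kt s ≤ m ∧
      t (kt s) ≤ s ∧ s < t (kt s + 1) ∧
      (1:ℝ) ≤ c ∧ ((N (kt s) (x s)) : ℝ) ≤ c + 1 := by
    intro s hs
    simp only [hA, Finset.mem_filter, Finset.mem_Icc] at hs
    obtain ⟨⟨hs1, hsT⟩, hcond⟩ := hs
    obtain ⟨hk1, hkm, hts, hmaxk⟩ := hkt s hs1 hsT
    have hsq : Real.sqrt ((s:ℝ)/n) ≤ c := by
      apply Real.sqrt_le_sqrt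
      have : (s:ℝ) ≤ (T:ℝ) := by exact_mod_cast hsT
      gcongr
    have h1 : (1:ℝ) ≤ Real.sqrt ((s:ℝ)/n) :=
      le_trans (le_max_left 1 _) hcond
    have hNb : ((N (kt s) (x s)) : ℝ) ≤ c + 1 := by
      have h2 : ((N (kt s) (x s)) : ℝ) - 1 ≤ Real.sqrt ((s:ℝ)/n) :=
        le_trans (le_max_right 1 _) hcond
      linarith
    have hlt : s < t (kt s + 1) := by
      by_contra hcontra
      push_neg at hcontra
      rcases lt_or_eq_of_le hkm with h | h
      · have := hmaxk (kt s + 1) (by omega) (by omega) hcontra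
        omega
      · rw [h] at hcontra; omega
    exact ⟨hs1, hsT, hk1, hkm, hts, hlt, le_trans h1 hsq, hNb⟩
  -- per-fiber bound
  have key : ∀ y ∈ Y, ((A.filter (fun s => x s = y)).card : ℝ) ≤ 2 * c + 2 := by
    intro y _
    set S := A.filter (fun s => x s = y) with hS
    rcases S.eq_empty_or_nonempty with h | h
    · simp only [h, Finset.card_empty, Nat.cast_zero]; positivity
    · obtain ⟨s₀, hs₀, hmax⟩ := S.exists_max_image kt h
      have hs₀A : s₀ ∈ A := (Finset.mem_filter.mp hs₀).1
      have hxs₀ : x s₀ = y := (Finset.mem_filter.mp hs₀).2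
      set K := kt s₀ with hK
      obtain ⟨_, _, hK1, hKm, _, _, hc1, hNb⟩ := hAfact s₀ hs₀A
      rw [hxs₀] at hNb
      -- S is contained in occurrences of y before episode K+1
      have hsub : S ⊆ (Finset.Ico 1 (t (K+1))).filter (fun s => x s = y) := by
        intro s hs
        have hsA : s ∈ A := (Finset.mem_filter.mp hs).1
        have hxs : x s = y := (Finset.mem_filter.mp hs).2
        obtain ⟨hs1, hsT, hk1, hkm, hts, hlt, _, _⟩ := hAfact s hsA
        have hkle : kt s ≤ K := hmax s hs
        have : t (kt s + 1) ≤ t (K + 1) := htle _ _ (by omega) (by omega) (by omega)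
        exact Finset.mem_filter.mpr ⟨Finset.mem_Ico.mpr ⟨hs1, by omega⟩, hxs⟩
      have hcard1 : S.card ≤ N (K+1) y := by
        rw [hN]; exact Finset.card_le_card hsub
      -- split N (K+1) = N K + ν K
      have h1K : 1 ≤ t K := by
        have := htle 1 K le_rfl hK1 (by omega)
        omega
      have hKle : t K ≤ t (K+1) := hstep K hK1 hKm
      have hsplit : N (K+1) y = N K y + ν K y := by
        rw [hN, hN, hν, ← Finset.card_union_of_disjoint
          (Finset.disjoint_filter_filter (Finset.Ico_disjoint_Ico_consecutive 1 (t K) (t (K+1)))),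
          ← Finset.filter_union, Finset.Ico_union_Ico_eq_Ico h1K hKle]
      have hν' : ν K y ≤ max 1 (N K y) := hstop K y hK1 hKm
      have hmaxb : ((max 1 (N K y) : ℕ) : ℝ) ≤ c + 1 := by
        push_cast
        exact max_le (by linarith) hNb
      have hν'' : ((ν K y : ℕ) : ℝ) ≤ c + 1 :=
        le_trans (by exact_mod_cast hν') hmaxb
      have : (S.card : ℝ) ≤ (N (K+1) y : ℝ) := by exact_mod_cast hcard1
      rw [hsplit] at this
      push_cast at this
      linarith
  -- sum over fibers
  have hcard : A.card = ∑ y ∈ Y, (A.filter (fun s => x s = y)).card :=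
    Finset.card_eq_sum_card_fiberwise (fun s hs => by
      have hs' : s ∈ A := hs
      simp only [hA, Finset.mem_filter, Finset.mem_Icc] at hs'
      exact hxY s hs'.1.1 hs'.1.2)
  have hmn : (mbar:ℝ) ≤ n := by
    have : Y.card ≤ Fintype.card X := Finset.card_le_univ Y
    rw [hY, ← hn] at this
    exact_mod_cast this
  have hmc : (mbar:ℝ) * c ≤ Real.sqrt ((mbar:ℝ) * T) := by
    have heq : (mbar:ℝ) * c = Real.sqrt ((mbar:ℝ)^2 * ((T:ℝ)/n)) := by
      rw [Real.sqrt_mul (sq_nonneg _), Real.sqrt_sq (by positivity)]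
    rw [heq]
    apply Real.sqrt_le_sqrt
    have h0 : (0:ℝ) ≤ (mbar:ℝ) * T := by positivity
    have h1 := mul_le_mul_of_nonneg_right hmn h0
    have h2 : (mbar:ℝ)^2 * ((T:ℝ)/n) = ((mbar:ℝ) * ((mbar:ℝ) * T)) / n := by ring
    rw [h2, div_le_iff₀ hn0]
    nlinarith
  have hsum : ((A.card : ℕ) : ℝ) ≤ (mbar : ℝ) * (2 * c + 2) := by
    rw [hcard]
    push_cast
    calc (∑ y ∈ Y, ((A.filter (fun s => x s = y)).card : ℝ))
        ≤ ∑ _y ∈ Y, (2 * c + 2) := Finset.sum_le_sum key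
      _ = (mbar:ℝ) * (2 * c + 2) := by rw [Finset.sum_const, hY]; ring
  calc (A.card : ℝ) ≤ (mbar : ℝ) * (2 * c + 2) := hsum
    _ = 2 * ((mbar:ℝ) * c) + 2 * mbar := by ring
    _ ≤ 2 * Real.sqrt ((mbar : ℝ) * T) + 2 * mbar := by linarith
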